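/- arXiv:0909.2129 — 2 statements merged into one kernel-verified Lean document; each statement's English description precedes it below -/
import Mathlib

section
/- Let C ⊆ R^n be a polyhedral cone of dimension m, and let D_1, ..., D_s ⊆ R^n be polyhedral cones with C ⊆ D_1 ∪ ... ∪ D_s, where dim D_1 = m and dim D_i < m for i = 2, ..., s. Then C ⊆ D_1. -/
/-- A polyhedral (finitely generated) cone in `ℝⁿ`. -/
def IsPolyCone {n : ℕ} (C : Set (EuclideanSpace ℝ (Fin n))) : Prop :=
  ∃ (m : ℕ) (v : Fin m → EuclideanSpace ℝ (Fin n)),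
    C = {x | ∃ c : Fin m → ℝ, (∀ i, 0 ≤ c i) ∧ x = ∑ i, c i • v i}

/-- `F` is a face of the cone `C` (cut out by a supporting linear functional,
or `C` itself). -/
def IsFaceOf {n : ℕ} (F C : Set (EuclideanSpace ℝ (Fin n))) : Prop :=
  F = C ∨ ∃ l : EuclideanSpace ℝ (Fin n) →ₗ[ℝ] ℝ,
    (∀ x ∈ C, l x ≤ 0) ∧ F = {x ∈ C | l x = 0}

/-- A polyhedral fan in `ℝⁿ`: a finite collection of polyhedral cones, closed
under taking faces, such that any two cones intersect in a common face. -/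
structure PolyFan (n : ℕ) where
  cones : Set (Set (EuclideanSpace ℝ (Fin n)))
  finite : cones.Finite
  poly : ∀ C ∈ cones, IsPolyCone C
  faces_mem : ∀ C ∈ cones, ∀ F, IsFaceOf F C → F ∈ cones
  inter_face : ∀ C ∈ cones, ∀ D ∈ cones, IsFaceOf (C ∩ D) C

/-- The support of a fan: the union of its cones. -/
def PolyFan.support {n : ℕ} (F : PolyFan n) : Set (EuclideanSpace ℝ (Fin n)) :=
  ⋃ C ∈ F.cones, C

/-- The dimension of a cone: the dimension of its affine hull. -/
noncomputable def coneDim {n : ℕ} (C : Set (EuclideanSpace ℝ (Fin n))) : ℕ :=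
  Module.finrank ℝ (affineSpan ℝ C).direction

/-- The relative interior of a set. -/
def relint {n : ℕ} (C : Set (EuclideanSpace ℝ (Fin n))) : Set (EuclideanSpace ℝ (Fin n)) :=
  intrinsicInterior ℝ C

/-- A maximal cone of a fan. -/
def PolyFan.IsMaximal {n : ℕ} (F : PolyFan n) (C : Set (EuclideanSpace ℝ (Fin n))) : Prop :=
  C ∈ F.cones ∧ ∀ D ∈ F.cones, C ⊆ D → D = C


open Finset Set


section cones

variable {E : Type*} [NormedAddCommGroup E] [NormedSpace ℝ E]

def coneOf {k : ℕ} (v : Fin k → E) : Set E :=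
  {x | ∃ c : Fin k → ℝ, (∀ i, 0 ≤ c i) ∧ x = ∑ i, c i • v i}

lemma isClosed_coneOf_of_linIndep [FiniteDimensional ℝ E] {k : ℕ} {v : Fin k → E}
    (hv : LinearIndependent ℝ v) : IsClosed (coneOf v) := by
  let φ : (Fin k → ℝ) →ₗ[ℝ] E :=
    { toFun := fun c => ∑ i, c i • v i
      map_add' := by intro a b; simp [add_smul, Finset.sum_add_distrib]
      map_smul' := by intro t a; simp [smul_smul, Finset.smul_sum] }
  have hker : LinearMap.ker φ = ⊥ := by
    rw [LinearMap.ker_eq_bot']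
    intro c hc
    funext i
    exact Fintype.linearIndependent_iff.mp hv c hc i
  have hce := LinearMap.isClosedEmbedding_of_injective hker
  have himg : coneOf v = φ '' {c | ∀ i, 0 ≤ c i} := by
    ext x
    constructor
    · rintro ⟨c, hc, rfl⟩; exact ⟨c, hc, rfl⟩
    · rintro ⟨c, hc, rfl⟩; exact ⟨c, hc, rfl⟩
  rw [himg]
  apply hce.isClosedMap
  have : {c : Fin k → ℝ | ∀ i, 0 ≤ c i} = ⋂ i, {c | 0 ≤ c i} := by ext; simp
  rw [this]
  exact isClosed_iInter fun i => isClosed_le continuous_const (continuous_apply i)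

lemma isClosed_coneOf [FiniteDimensional ℝ E] : ∀ (k : ℕ) (v : Fin k → E), IsClosed (coneOf v) := by
  intro k
  induction k with
  | zero =>
    intro v
    have : coneOf v = {0} := by
      ext x
      constructor
      · rintro ⟨c, -, rfl⟩; simp
      · rintro rfl; exact ⟨finZeroElim, fun i => i.elim0, by simp⟩
    rw [this]; exact isClosed_singleton
  | succ k ih =>
    intro v
    by_cases hv : LinearIndependent ℝ v
    · exact isClosed_coneOf_of_linIndep hv
    · classical
      obtain ⟨g, hg0, hgneg⟩ : ∃ g : Fin (k+1) → ℝ, ∑ i, g i • v i = 0 ∧ ∃ j, g j < 0 := by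
        obtain ⟨g, hg0, j, hj⟩ := Fintype.not_linearIndependent_iff.mp hv
        rcases lt_or_gt_of_ne hj with h | h
        · exact ⟨g, hg0, j, h⟩
        · refine ⟨-g, ?_, j, by simpa using h⟩
          simp only [Pi.neg_apply, neg_smul, Finset.sum_neg_distrib, hg0, neg_zero]
      have heq : coneOf v = ⋃ i : Fin (k+1), coneOf (v ∘ i.succAbove) := by
        apply Set.Subset.antisymm
        · rintro x ⟨c, hc, rfl⟩
          set T : Finset (Fin (k+1)) := Finset.univ.filter (fun i => g i < 0) with hT
          have hTne : T.Nonempty := by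
            obtain ⟨j, hj⟩ := hgneg
            exact ⟨j, by simp [hT, hj]⟩
          obtain ⟨i₀, hi₀T, hmin⟩ := T.exists_min_image (fun i => c i / (-g i)) hTne
          have hg₀ : g i₀ < 0 := by simpa [hT] using hi₀T
          set t : ℝ := c i₀ / (-g i₀) with htdef
          have ht : 0 ≤ t := div_nonneg (hc i₀) (by linarith)
          set c' : Fin (k+1) → ℝ := fun i => c i + t * g i with hc'def
          have hc' : ∀ i, 0 ≤ c' i := by
            intro i
            by_cases hgi : g i < 0
            · have hiT : i ∈ T := by simp [hT, hgi]
              have h1 : t ≤ c i / (-g i) := hmin i hiT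
              have h2 : t * (-g i) ≤ c i := (le_div_iff₀ (by linarith)).mp h1
              simp only [hc'def]
              nlinarith
            · push_neg at hgi
              have : 0 ≤ t * g i := mul_nonneg ht hgi
              simp only [hc'def]
              linarith [hc i]
          have hci₀ : c' i₀ = 0 := by
            have hne : -g i₀ ≠ 0 := by linarith
            simp only [hc'def, htdef]
            field_simp
            rw [div_self (by linarith : g i₀ ≠ 0)]; ring
          have hsum : ∑ i, c' i • v i = ∑ i, c i • v i := by
            simp only [hc'def, add_smul, Finset.sum_add_distrib, mul_smul]
            rw [← Finset.smul_sum, hg0, smul_zero, add_zero]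
          refine Set.mem_iUnion.mpr ⟨i₀, c' ∘ i₀.succAbove, fun j => hc' _, ?_⟩
          have hsplit := Fin.sum_univ_succAbove (fun i => c' i • v i) i₀
          simp only [hci₀, zero_smul, zero_add] at hsplit
          rw [hsplit] at hsum
          simpa [Function.comp] using hsum.symm
        · rintro x hx
          obtain ⟨i, c, hc, rfl⟩ := Set.mem_iUnion.mp hx
          set cc : Fin (k+1) → ℝ := i.insertNth (0:ℝ) c with hcc
          refine ⟨cc, ?_, ?_⟩
          · intro j
            refine i.succAboveCases (α := fun j => 0 ≤ cc j) ?_ ?_ j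
            · simp [hcc]
            · intro j'; simpa [hcc] using hc j'
          · rw [Fin.sum_univ_succAbove (fun j => cc j • v j) i]
            simp [hcc, Function.comp, Fin.insertNth_apply_same, Fin.insertNth_apply_succAbove]
      rw [heq]
      exact isClosed_iUnion_of_finite fun i => ih (v ∘ i.succAbove)

end cones


section line
variable {E : Type*} [AddCommGroup E] [Module ℝ E]

lemma line_subsingleton (W : Submodule ℝ E) {x u : E}
    (h : u ∉ W ∨ x ∉ W) : {t : ℝ | x + t • u ∈ W}.Subsingleton := by
  intro t ht t' ht'
  by_contra hne
  have key : (x + t • u) - (x + t' • u) = (t - t') • u := by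
    rw [sub_smul]; abel
  have hsub : (t - t') • u ∈ W := key ▸ W.sub_mem ht ht'
  have hu : u ∈ W := by
    have h2 := W.smul_mem (t - t')⁻¹ hsub
    rwa [smul_smul, inv_mul_cancel₀ (sub_ne_zero.2 hne), one_smul] at h2
  have hx : x ∈ W := by
    have h2 := W.sub_mem ht (W.smul_mem t hu)
    simpa using h2
  exact h.elim (fun h => h hu) (fun h => h hx)

lemma exists_avoid {C : Set E}
    (h0 : (0:E) ∈ C) (hadd : ∀ x ∈ C, ∀ y ∈ C, x + y ∈ C)
    (hsmul : ∀ (t:ℝ), 0 ≤ t → ∀ x ∈ C, t • x ∈ C)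
    {ι : Type*} [DecidableEq ι] (s : Finset ι) (W : ι → Submodule ℝ E)
    (hW : ∀ i ∈ s, ¬ C ⊆ W i) :
    ∃ y ∈ C, ∀ i ∈ s, y ∉ W i := by
  classical
  revert hW
  induction s using Finset.induction_on with
  | empty => exact fun _ => ⟨0, h0, by simp⟩
  | @insert j s hj ih =>
    intro hW
    obtain ⟨y, hyC, hys⟩ := ih (fun i hi => hW i (Finset.mem_insert_of_mem hi))
    obtain ⟨c, hcC, hcj⟩ := Set.not_subset.mp (hW j (Finset.mem_insert_self j s))
    set B : Set ℝ := ⋃ i ∈ (insert j s : Finset ι), {t : ℝ | y + t • c ∈ W i} with hB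
    have hBfin : B.Finite := by
      refine Set.Finite.biUnion (Finset.finite_toSet _) (fun i hi => ?_)
      refine Set.Subsingleton.finite (line_subsingleton (W i) ?_)
      rcases Finset.mem_insert.mp hi with rfl | hi
      · exact Or.inl hcj
      · exact Or.inr (hys i hi)
    obtain ⟨t, ht⟩ := ((Set.Ioi_infinite (0:ℝ)).diff hBfin).nonempty
    refine ⟨y + t • c, hadd y hyC _ (hsmul t (le_of_lt ht.1) c hcC), ?_⟩
    intro i hi hmem
    exact ht.2 (Set.mem_biUnion hi hmem)
end line

section poly
variable {n : ℕ}

lemma IsPolyCone.zero_mem {C : Set (EuclideanSpace ℝ (Fin n))} (h : IsPolyCone C) :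
    (0 : EuclideanSpace ℝ (Fin n)) ∈ C := by
  obtain ⟨k, v, rfl⟩ := h
  exact ⟨0, fun i => le_refl 0, by simp⟩

lemma IsPolyCone.add_mem {C : Set (EuclideanSpace ℝ (Fin n))} (h : IsPolyCone C)
    {x y : EuclideanSpace ℝ (Fin n)} (hx : x ∈ C) (hy : y ∈ C) : x + y ∈ C := by
  obtain ⟨k, v, rfl⟩ := h
  obtain ⟨c, hc, rfl⟩ := hx
  obtain ⟨d, hd, rfl⟩ := hy
  exact ⟨c + d, fun i => add_nonneg (hc i) (hd i), by simp [add_smul, Finset.sum_add_distrib]⟩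

lemma IsPolyCone.smul_mem {C : Set (EuclideanSpace ℝ (Fin n))} (h : IsPolyCone C)
    {t : ℝ} (ht : 0 ≤ t) {x : EuclideanSpace ℝ (Fin n)} (hx : x ∈ C) : t • x ∈ C := by
  obtain ⟨k, v, rfl⟩ := h
  obtain ⟨c, hc, rfl⟩ := hx
  exact ⟨fun i => t * c i, fun i => mul_nonneg ht (hc i),
    by rw [Finset.smul_sum]; simp [smul_smul]⟩

lemma coneDim_eq_span {S : Set (EuclideanSpace ℝ (Fin n))} (h0 : (0 : EuclideanSpace ℝ (Fin n)) ∈ S) :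
    coneDim S = Module.finrank ℝ (Submodule.span ℝ S) := by
  unfold coneDim
  have hvs : vectorSpan ℝ S = Submodule.span ℝ S := by
    apply le_antisymm
    · rw [vectorSpan_def]
      refine Submodule.span_le.mpr ?_
      rintro z hz
      obtain ⟨a, ha, b, hb, rfl⟩ := Set.mem_vsub.mp hz
      exact Submodule.sub_mem _ (Submodule.subset_span ha) (Submodule.subset_span hb)
    · refine Submodule.span_le.mpr (fun x hx => ?_)
      have : x -ᵥ 0 ∈ vectorSpan ℝ S := vsub_mem_vectorSpan ℝ hx h0
      simpa using this
  rw [direction_affineSpan, hvs]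
end poly

/-- If an `m`-dimensional polyhedral cone `C` is covered by polyhedral
cones `D 0, …, D (s-1)` where `D 0` has dimension `m` and all the others have dimension
`< m`, then `C ⊆ D 0`. -/
theorem stmt4 {n : ℕ} (m s : ℕ) (hs : 0 < s)
    (C : Set (EuclideanSpace ℝ (Fin n))) (D : Fin s → Set (EuclideanSpace ℝ (Fin n)))
    (hC : IsPolyCone C) (hD : ∀ i, IsPolyCone (D i))
    (hdimC : coneDim C = m) (hdimD0 : coneDim (D ⟨0, hs⟩) = m)
    (hdimDi : ∀ i : Fin s, i ≠ ⟨0, hs⟩ → coneDim (D i) < m)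
    (hcover : C ⊆ ⋃ i, D i) :
    C ⊆ D ⟨0, hs⟩ := by
  classical
  set i0 : Fin s := ⟨0, hs⟩ with hi0
  set W : Fin s → Submodule ℝ (EuclideanSpace ℝ (Fin n)) :=
    fun i => Submodule.span ℝ (D i) with hWdef
  set s' : Finset (Fin s) := Finset.univ.erase i0 with hs'
  have hCdim : Module.finrank ℝ (Submodule.span ℝ C) = m := by
    rw [← coneDim_eq_span hC.zero_mem]; exact hdimC
  have hWnot : ∀ i ∈ s', ¬ C ⊆ (W i : Set (EuclideanSpace ℝ (Fin n))) := by
    intro i hi hsub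
    have hine : i ≠ i0 := (Finset.mem_erase.mp hi).1
    have hdim : Module.finrank ℝ (W i) < m := by
      rw [hWdef, ← coneDim_eq_span (hD i).zero_mem]
      exact hdimDi i hine
    have hle : Submodule.span ℝ C ≤ W i := Submodule.span_le.mpr hsub
    have := Submodule.finrank_mono hle
    omega
  obtain ⟨y, hyC, hy⟩ := exists_avoid hC.zero_mem
    (fun x hx y hy => hC.add_mem hx hy) (fun t ht x hx => hC.smul_mem ht hx) s' W hWnot
  have hclosed : IsClosed (D i0) := by
    obtain ⟨k, w, hw⟩ := hD i0
    rw [hw]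
    exact isClosed_coneOf k w
  intro x hx
  have hxc : x ∈ closure (D i0) := by
    rw [mem_closure_iff]
    intro U hU hxU
    set B : Set ℝ := ⋃ i ∈ s', {t : ℝ | x + t • (y - x) ∈ W i} with hB
    have hBfin : B.Finite := by
      refine Set.Finite.biUnion (Finset.finite_toSet _) (fun i hi => ?_)
      refine Set.Subsingleton.finite (line_subsingleton (W i) ?_)
      by_cases hxW : x ∈ W i
      · left
        intro hyx
        exact hy i hi (by simpa using (W i).add_mem hyx hxW)
      · exact Or.inr hxW
    have hcont : Continuous (fun t : ℝ => x + t • (y - x)) := by continuity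
    have hopen : IsOpen {t : ℝ | x + t • (y - x) ∈ U} := hU.preimage hcont
    have h0mem : (0:ℝ) ∈ {t : ℝ | x + t • (y - x) ∈ U} := by simpa using hxU
    obtain ⟨ε, hε, hball⟩ := Metric.isOpen_iff.mp hopen 0 h0mem
    have hlt : (0:ℝ) < min ε 1 := lt_min hε one_pos
    obtain ⟨t, ht⟩ := ((Set.Ioo_infinite hlt).diff hBfin).nonempty
    obtain ⟨ht0, htlt⟩ := ht.1
    have htε : t < ε := lt_of_lt_of_le htlt (min_le_left _ _)
    have ht1 : t < 1 := lt_of_lt_of_le htlt (min_le_right _ _)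
    have htU : x + t • (y - x) ∈ U := by
      apply hball
      simp only [Metric.mem_ball, Real.dist_eq, sub_zero]
      rw [abs_of_pos ht0]
      exact htε
    have htC : x + t • (y - x) ∈ C := by
      have heq : x + t • (y - x) = (1 - t) • x + t • y := by
        rw [smul_sub, sub_smul, one_smul]; abel
      rw [heq]
      exact hC.add_mem (hC.smul_mem (by linarith) hx) (hC.smul_mem (le_of_lt ht0) hyC)
    have htD : x + t • (y - x) ∈ D i0 := by
      rcases Set.mem_iUnion.mp (hcover htC) with ⟨i, hi⟩
      by_cases hii : i = i0
      · rwa [hii] at hi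
      · exfalso
        apply ht.2
        refine Set.mem_biUnion (Finset.mem_erase.mpr ⟨hii, Finset.mem_univ i⟩) ?_
        exact Submodule.subset_span hi
    exact ⟨_, htU, htD⟩
  rwa [hclosed.closure_eq] at hxc
end

section
/- For 0 < m < n, let W_n^m denote the fan in R^n whose cones are C_A = {ω ∈ R^n : ω_i = min_k ω_k for all i ∈ A} for subsets A ⊆ {1,...,n} with |A| ≥ n−m+1. Then every fan F in R^n with support equal to the support of W_n^m refines W_n^m: for every relatively open cone C̊ of F there is a relatively open cone C̊_A of W_n^m with C̊ ⊆ C̊_A. -/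
/-- The cone `C_A = {ω : ω_i = min_k ω_k for all i ∈ A}` of the fan `W_n`. -/
def coneW {n : ℕ} (A : Finset (Fin n)) : Set (EuclideanSpace ℝ (Fin n)) :=
  {ω | ∀ i ∈ A, ∀ k, ω i ≤ ω k}

open scoped Classical in
/-- The set of indices at which `ω` attains its minimal coordinate. -/
noncomputable def argminSet {n : ℕ} (ω : EuclideanSpace ℝ (Fin n)) : Finset (Fin n) :=
  Finset.univ.filter (fun i => ∀ k, ω i ≤ ω k)


open Filter Set Topology
-- Caratheodory for cones
lemma cara_aux {E : Type*} [AddCommGroup E] [Module ℝ E] {m : ℕ} (v : Fin m → E) :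
    ∀ (N : ℕ) (s : Finset (Fin m)), s.card ≤ N → ∀ c : Fin m → ℝ, (∀ i, 0 ≤ c i) →
      (∀ i ∉ s, c i = 0) →
      ∃ (t : Finset (Fin m)) (d : Fin m → ℝ), (∀ i, 0 ≤ d i) ∧ (∀ i ∉ t, d i = 0) ∧
        (∑ i, d i • v i = ∑ i, c i • v i) ∧ LinearIndependent ℝ (fun i : ↥t => v i) := by
  intro N
  induction N with
  | zero =>
    intro s hs c hc hsupp
    have hse : s = ∅ := Finset.card_eq_zero.mp (Nat.le_zero.mp hs)
    subst hse
    refine ⟨∅, c, hc, hsupp, rfl, ?_⟩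
    haveI : IsEmpty ↥(∅ : Finset (Fin m)) := ⟨fun x => absurd x.2 (Finset.notMem_empty _)⟩
    exact linearIndependent_empty_type
  | succ N ih =>
    intro s hs c hc hsupp
    by_cases hind : LinearIndependent ℝ (fun i : ↥s => v i)
    · exact ⟨s, c, hc, hsupp, rfl, hind⟩
    classical
    obtain ⟨g, hgsum, i0, hgi0⟩ := Fintype.not_linearIndependent_iff.mp hind
    set G : Fin m → ℝ := fun i => if h : i ∈ s then g ⟨i, h⟩ else 0 with hG
    have hGs : ∀ i ∉ s, G i = 0 := fun i hi => dif_neg hi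
    have hGsum : ∑ i, G i • v i = 0 := by
      rw [← Finset.sum_subset (Finset.subset_univ s)
        (fun i _ hi => by rw [hGs i hi, zero_smul])]
      rw [← hgsum, ← Finset.sum_coe_sort s (fun i => G i • v i)]
      refine Finset.sum_congr rfl fun i _ => ?_
      rw [hG]; simp [i.2]
    -- key construction, applied to a = G or -G
    have key : ∀ a : Fin m → ℝ, (∑ i, a i • v i = 0) → (∀ i ∉ s, a i = 0) →
        (∃ i, 0 < a i) → ∃ (t : Finset (Fin m)) (d : Fin m → ℝ),
        (∀ i, 0 ≤ d i) ∧ (∀ i ∉ t, d i = 0) ∧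
        (∑ i, d i • v i = ∑ i, c i • v i) ∧ LinearIndependent ℝ (fun i : ↥t => v i) := by
      rintro a hasum hasupp ⟨ip, hip⟩
      have hPne : (s.filter (fun i => 0 < a i)).Nonempty := by
        refine ⟨ip, Finset.mem_filter.mpr ⟨?_, hip⟩⟩
        by_contra h
        rw [hasupp ip h] at hip; exact lt_irrefl 0 hip
      obtain ⟨j, hjP, hjmin⟩ := Finset.exists_min_image _ (fun i => c i / a i) hPne
      have hjs : j ∈ s := (Finset.mem_filter.mp hjP).1
      have hja : 0 < a j := (Finset.mem_filter.mp hjP).2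
      set tc := c j / a j with htdef
      have ht0 : 0 ≤ tc := div_nonneg (hc j) hja.le
      set d : Fin m → ℝ := fun i => c i - tc * a i with hd
      have hd0 : ∀ i, 0 ≤ d i := by
        intro i
        rcases le_or_gt (a i) 0 with h | h
        · have h2 : tc * a i ≤ 0 := mul_nonpos_of_nonneg_of_nonpos ht0 h
          have := hc i
          simp only [hd]; linarith
        · have his : i ∈ s := by
            by_contra hi
            rw [hasupp i hi] at h; exact lt_irrefl 0 h
          have h2 : tc * a i ≤ c i :=
            (le_div_iff₀ h).mp (hjmin i (Finset.mem_filter.mpr ⟨his, h⟩))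
          simp only [hd]; linarith
      have hdsupp : ∀ i ∉ s.erase j, d i = 0 := by
        intro i hi
        rcases Finset.mem_erase.not.mp hi with hi'
        simp only [not_and_or, not_not] at hi'
        rcases hi' with rfl | hi'
        · simp only [hd, htdef]
          field_simp
          ring
        · rw [hd]
          simp [hasupp i hi', hsupp i hi']
      have hdsum : ∑ i, d i • v i = ∑ i, c i • v i := by
        simp only [hd, sub_smul, mul_smul, Finset.sum_sub_distrib, ← Finset.smul_sum, hasum,
          smul_zero, sub_zero]
      have hcard : (s.erase j).card ≤ N := by
        have := Finset.card_erase_of_mem hjs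
        omega
      obtain ⟨t, d', h1, h2, h3, h4⟩ := ih (s.erase j) hcard d hd0 hdsupp
      exact ⟨t, d', h1, h2, h3.trans hdsum, h4⟩
    have hGi0 : G ↑i0 = g i0 := by rw [hG]; simp
    rcases lt_trichotomy (g i0) 0 with h | h | h
    · refine key (fun i => -G i) (by simpa using hGsum) (fun i hi => by simp [hGs i hi])
        ⟨↑i0, ?_⟩
      simp only [hGi0]; linarith
    · exact absurd h hgi0
    · exact key G hGsum hGs ⟨↑i0, by rw [hGi0]; exact h⟩

lemma IsPolyCone.convex {n : ℕ} {C : Set (EuclideanSpace ℝ (Fin n))} (h : IsPolyCone C) :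
    Convex ℝ C := by
  obtain ⟨m, v, rfl⟩ := h
  rintro x ⟨c, hc, rfl⟩ y ⟨d, hd, rfl⟩ a b ha hb hab
  refine ⟨fun i => a * c i + b * d i,
    fun i => add_nonneg (mul_nonneg ha (hc i)) (mul_nonneg hb (hd i)), ?_⟩
  rw [Finset.smul_sum, Finset.smul_sum, ← Finset.sum_add_distrib]
  exact Finset.sum_congr rfl fun i _ => by rw [add_smul, mul_smul, mul_smul]

lemma IsPolyCone.isClosed {n : ℕ} {C : Set (EuclideanSpace ℝ (Fin n))} (h : IsPolyCone C) :
    IsClosed C := by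
  obtain ⟨m, v, rfl⟩ := h
  classical
  have hrw : {x | ∃ c : Fin m → ℝ, (∀ i, 0 ≤ c i) ∧ x = ∑ i, c i • v i} =
      ⋃ (t : Finset (Fin m)) (_ : LinearIndependent ℝ (fun i : ↥t => v i)),
        {x | ∃ c : Fin m → ℝ, (∀ i, 0 ≤ c i) ∧ (∀ i ∉ t, c i = 0) ∧ x = ∑ i, c i • v i} := by
    apply Subset.antisymm
    · rintro x ⟨c, hc, rfl⟩
      obtain ⟨t, d, h1, h2, h3, h4⟩ :=
        cara_aux v Finset.univ.card Finset.univ le_rfl c hc (by simp)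
      exact mem_iUnion₂.mpr ⟨t, h4, d, h1, h2, h3.symm⟩
    · rintro x hx
      obtain ⟨t, ht, c, hc, hsup, rfl⟩ := mem_iUnion₂.mp hx
      exact ⟨c, hc, rfl⟩
  rw [hrw]
  refine isClosed_iUnion_of_finite fun t => isClosed_iUnion_of_finite fun ht => ?_
  set f : (↥t → ℝ) →ₗ[ℝ] EuclideanSpace ℝ (Fin n) :=
    ∑ i : ↥t, (LinearMap.proj i).smulRight (v ↑i) with hfdef
  have hf : ∀ c : ↥t → ℝ, f c = ∑ i : ↥t, c i • v ↑i := by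
    intro c
    simp [hfdef, LinearMap.sum_apply, LinearMap.smulRight_apply]
  have hker : LinearMap.ker f = ⊥ := by
    rw [LinearMap.ker_eq_bot']
    intro c hc0
    rw [hf] at hc0
    funext i
    exact Fintype.linearIndependent_iff.mp ht c hc0 i
  have hemb := LinearMap.isClosedEmbedding_of_injective hker
  have himg : {x | ∃ c : Fin m → ℝ, (∀ i, 0 ≤ c i) ∧ (∀ i ∉ t, c i = 0) ∧ x = ∑ i, c i • v i}
      = f '' {c : ↥t → ℝ | ∀ i, 0 ≤ c i} := by
    ext x
    constructor
    · rintro ⟨c, hc, hsup, rfl⟩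
      have h3 : f (fun i => c ↑i) = ∑ i : Fin m, c i • v i := by
        rw [hf, Finset.sum_coe_sort t (fun i => c i • v i)]
        exact Finset.sum_subset (Finset.subset_univ t)
          (fun i _ hi => by rw [hsup i hi, zero_smul])
      exact ⟨fun i => c ↑i, fun i => hc ↑i, h3⟩
    · rintro ⟨c, hc, rfl⟩
      set c' : Fin m → ℝ := fun i => if h : i ∈ t then c ⟨i, h⟩ else 0 with hc'
      have h1 : ∀ i, 0 ≤ c' i := by
        intro i
        by_cases h : i ∈ t
        · simpa only [hc', dif_pos h] using hc ⟨i, h⟩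
        · simp [hc', h]
      have h3 : f c = ∑ i : Fin m, c' i • v i := by
        rw [hf]
        rw [← Finset.sum_subset (Finset.subset_univ t)
          (fun i _ hi => by simp only [hc', dif_neg hi, zero_smul])]
        rw [← Finset.sum_coe_sort t (fun i => c' i • v i)]
        exact Finset.sum_congr rfl fun i _ => by simp [hc', i.2]
      exact ⟨c', h1, fun i hi => dif_neg hi, h3⟩
  rw [himg]
  refine hemb.isClosedMap _ ?_
  have : {c : ↥t → ℝ | ∀ i, 0 ≤ c i} = ⋂ i, {c : ↥t → ℝ | 0 ≤ c i} := by
    ext c; simp [mem_iInter]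
  rw [this]
  exact isClosed_iInter fun i => isClosed_le continuous_const (continuous_apply i)

-- extension lemma
lemma relint_extend {n : ℕ} {C : Set (EuclideanSpace ℝ (Fin n))}
    {x y : EuclideanSpace ℝ (Fin n)} (hx : x ∈ intrinsicInterior ℝ C) (hy : y ∈ C) :
    ∃ ε : ℝ, 0 < ε ∧ x + ε • (x - y) ∈ C := by
  obtain ⟨p, hpint, hpx⟩ := mem_intrinsicInterior.mp hx
  have hyspan : y ∈ affineSpan ℝ C := subset_affineSpan ℝ C hy
  have hmem : ∀ t : ℝ, (p : EuclideanSpace ℝ (Fin n)) + t • ((p : EuclideanSpace ℝ (Fin n)) - y)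
      ∈ affineSpan ℝ C := by
    intro t
    have := AffineSubspace.smul_vsub_vadd_mem (affineSpan ℝ C) t p.2 hyspan p.2
    simpa [vsub_eq_sub, vadd_eq_add, add_comm] using this
  set γ : ℝ → (affineSpan ℝ C : Set (EuclideanSpace ℝ (Fin n))) :=
    fun t => ⟨(p : EuclideanSpace ℝ (Fin n)) + t • ((p : EuclideanSpace ℝ (Fin n)) - y),
      hmem t⟩ with hγ
  have hcont : Continuous γ := by
    refine Continuous.subtype_mk ?_ _
    exact continuous_const.add (continuous_id.smul continuous_const)
  have hγ0 : γ 0 = p := by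
    apply Subtype.ext
    simp [hγ]
  have hopen : IsOpen (γ ⁻¹' (interior ((↑) ⁻¹' C : Set (affineSpan ℝ C)))) :=
    isOpen_interior.preimage hcont
  have h0 : (0 : ℝ) ∈ γ ⁻¹' (interior ((↑) ⁻¹' C)) := by
    simp only [mem_preimage, hγ0]
    exact hpint
  obtain ⟨ε, hε, hball⟩ := Metric.isOpen_iff.mp hopen 0 h0
  have hmem2 : γ (ε / 2) ∈ interior ((↑) ⁻¹' C : Set (affineSpan ℝ C)) := by
    apply hball
    rw [Metric.mem_ball, Real.dist_eq, sub_zero, abs_of_nonneg (le_of_lt (half_pos hε))]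
    linarith
  have := interior_subset hmem2
  refine ⟨ε / 2, half_pos hε, ?_⟩
  have : (γ (ε / 2) : EuclideanSpace ℝ (Fin n)) ∈ C := this
  rw [hγ] at this
  simpa [hpx] using this

lemma mem_argminSet {n : ℕ} {ω : EuclideanSpace ℝ (Fin n)} {i : Fin n} :
    i ∈ argminSet ω ↔ ∀ k, ω i ≤ ω k := by
  classical
  simp [argminSet]

lemma coneW_subset_argminSet {n : ℕ} {A : Finset (Fin n)} {ω : EuclideanSpace ℝ (Fin n)}
    (h : ω ∈ coneW A) : A ⊆ argminSet ω :=
  fun i hi => mem_argminSet.mpr (h i hi)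

-- face containing a relative interior point is everything
lemma face_subset_of_relint_mem {n : ℕ} {C G : Set (EuclideanSpace ℝ (Fin n))}
    (hface : IsFaceOf G C) {x : EuclideanSpace ℝ (Fin n)}
    (hx : x ∈ intrinsicInterior ℝ C) (hxG : x ∈ G) : C ⊆ G := by
  rcases hface with rfl | ⟨l, hl, rfl⟩
  · exact subset_rfl
  intro y hy
  obtain ⟨hxC, hxl⟩ := hxG
  obtain ⟨ε, hε, hz⟩ := relint_extend hx hy
  have h1 := hl _ hz
  have h2 := hl y hy
  have h3 : l x + ε * (l x - l y) ≤ 0 := by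
    simpa [map_add, map_smul, map_sub, smul_eq_mul] using h1
  rw [hxl] at h3
  refine ⟨hy, ?_⟩
  nlinarith

-- relint of coneW: points with argmin exactly A are intrinsic-interior points
lemma mem_relint_coneW {n : ℕ} {A : Finset (Fin n)} {ω : EuclideanSpace ℝ (Fin n)}
    (h : argminSet ω = A) : ω ∈ intrinsicInterior ℝ (coneW A) := by
  have hωA : ω ∈ coneW A := fun i hi k => mem_argminSet.mp (h ▸ hi) k
  -- every point of the affine span has equal A coordinates
  have hspan : ∀ z ∈ affineSpan ℝ (coneW A), ∀ i ∈ A, ∀ j ∈ A,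
      (z : EuclideanSpace ℝ (Fin n)) i = z j := by
    intro z hz
    refine affineSpan_induction (p := fun z => ∀ i ∈ A, ∀ j ∈ A, z i = z j) hz ?_ ?_
    · intro p hp i hi j hj
      exact le_antisymm (hp i hi j) (hp j hj i)
    · intro c u w p hu hw hp i hi j hj
      have : ∀ k, (c • (u -ᵥ w) +ᵥ p) k = c * (u k - w k) + p k := by
        intro k; simp [vsub_eq_sub, vadd_eq_add]
      rw [this i, this j, hu i hi j hj, hw i hi j hj, hp i hi j hj]
  -- the open set
  set U : Set (EuclideanSpace ℝ (Fin n)) :=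
    ⋂ (i : Fin n) (_ : i ∈ A) (k : Fin n) (_ : k ∉ A), {z | z i < z k} with hU
  have hUopen : IsOpen U := by
    refine isOpen_iInter_of_finite fun i => isOpen_iInter_of_finite fun _ =>
      isOpen_iInter_of_finite fun k => isOpen_iInter_of_finite fun _ => ?_
    exact isOpen_lt (EuclideanSpace.proj i).continuous (EuclideanSpace.proj k).continuous
  have hωU : ω ∈ U := by
    simp only [hU, mem_iInter, mem_setOf_eq]
    intro i hi k hk
    have hik : ω i ≤ ω k := mem_argminSet.mp (h ▸ hi) k
    have : ¬ ∀ j, ω k ≤ ω j := by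
      intro hc
      exact hk (h ▸ mem_argminSet.mpr hc)
    push_neg at this
    obtain ⟨j, hj⟩ := this
    exact lt_of_le_of_lt (mem_argminSet.mp (h ▸ hi) j) hj
  -- conclude
  rw [mem_intrinsicInterior]
  refine ⟨⟨ω, subset_affineSpan ℝ _ hωA⟩, ?_, rfl⟩
  rw [mem_interior]
  refine ⟨(↑) ⁻¹' U, ?_, hUopen.preimage continuous_subtype_val, mem_preimage.mpr hωU⟩
  intro z hz
  intro i hi k
  by_cases hk : k ∈ A
  · exact le_of_eq (hspan z z.2 i hi k hk)
  · have := mem_iInter.mp (mem_iInter.mp (mem_iInter.mp (mem_iInter.mp hz i) hi) k) hk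
    exact le_of_lt this

-- now the new stuff

noncomputable def ee {n : ℕ} (i : Fin n) : EuclideanSpace ℝ (Fin n) :=
  EuclideanSpace.single i (1 : ℝ)

lemma pert_apply {n : ℕ} (x : EuclideanSpace ℝ (Fin n)) (δ : ℝ) (i k : Fin n) :
    (x - δ • ee i) k = if k = i then x k - δ else x k := by
  rw [PiLp.sub_apply, PiLp.smul_apply, ee, EuclideanSpace.single_apply]
  split <;> simp

def Tset (n m : ℕ) : Set (EuclideanSpace ℝ (Fin n)) :=
  {ω | ∃ A : Finset (Fin n), n - m + 1 ≤ A.card ∧ ω ∈ coneW A}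

def Sdir {n : ℕ} (T : Set (EuclideanSpace ℝ (Fin n))) (x : EuclideanSpace ℝ (Fin n))
    (i : Fin n) : Prop :=
  ∃ᶠ δ in 𝓝[>] (0 : ℝ), x - δ • ee i ∈ T

lemma not_Sdir_of_mem_argmin {n m : ℕ} (h2 : 2 ≤ n - m + 1) {x : EuclideanSpace ℝ (Fin n)}
    {i : Fin n} (hi : i ∈ argminSet x) : ¬ Sdir (Tset n m) x i := by
  rw [Sdir, Filter.not_frequently]
  filter_upwards [self_mem_nhdsWithin] with δ hδ
  rw [Set.mem_Ioi] at hδ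
  rintro ⟨A', hcard, hA'⟩
  have hxi := mem_argminSet.mp hi
  have hsub : argminSet (x - δ • ee i) ⊆ {i} := by
    intro j hj
    rw [Finset.mem_singleton]
    by_contra hji
    have h1 := mem_argminSet.mp hj i
    rw [pert_apply, pert_apply, if_pos rfl, if_neg hji] at h1
    have := hxi j
    linarith
  have := Finset.card_le_card ((coneW_subset_argminSet hA').trans hsub)
  simp only [Finset.card_singleton] at this
  omega

lemma Sdir_of_not_mem_argmin {n m : ℕ} {x : EuclideanSpace ℝ (Fin n)}
    (hx : x ∈ Tset n m) {i : Fin n} (hi : i ∉ argminSet x) : Sdir (Tset n m) x i := by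
  obtain ⟨A', hcard, hA'⟩ := hx
  have hnot : ¬ ∀ k, x i ≤ x k := fun h => hi (mem_argminSet.mpr h)
  push_neg at hnot
  obtain ⟨k0, hk0⟩ := hnot
  have hgap : (0:ℝ) < x i - x k0 := by linarith
  apply Filter.Eventually.frequently
  filter_upwards [Ioo_mem_nhdsGT_of_mem (show (0:ℝ) ∈ Set.Ico 0 (x i - x k0) from
    ⟨le_refl 0, hgap⟩)] with δ hδ
  refine ⟨A', hcard, fun j hj k => ?_⟩
  have hji : j ≠ i := fun h => hi (h ▸ coneW_subset_argminSet hA' hj)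
  have hxj := hA' j hj
  rw [pert_apply, pert_apply, if_neg hji]
  by_cases hki : k = i
  · rw [if_pos hki]
    subst hki
    have := hxj k0
    simp only [Set.mem_Ioo] at hδ
    linarith
  · rw [if_neg hki]
    exact hxj k

lemma Sdir_transfer {n : ℕ} (F : PolyFan n) {C : Set (EuclideanSpace ℝ (Fin n))}
    (hC : C ∈ F.cones) {x y : EuclideanSpace ℝ (Fin n)}
    (hx : x ∈ intrinsicInterior ℝ C) (hy : y ∈ intrinsicInterior ℝ C) {i : Fin n}
    (hS : Sdir F.support x i) : Sdir F.support y i := by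
  -- a single cone absorbs frequently many perturbations
  have h1 : ∃ D ∈ F.cones, ∃ᶠ δ in 𝓝[>] (0:ℝ), x - δ • ee i ∈ D := by
    by_contra h
    push_neg at h
    have h2 : ∀ D ∈ F.cones, ∀ᶠ δ in 𝓝[>] (0:ℝ), x - δ • ee i ∉ D := fun D hD =>
      h D hD
    have h3 : ∀ᶠ δ in 𝓝[>] (0:ℝ), ∀ D ∈ F.cones, x - δ • ee i ∉ D :=
      (Filter.eventually_all_finite F.finite).mpr h2
    obtain ⟨δ, hmem, hnot⟩ := (hS.and_eventually h3).exists
    rw [PolyFan.support, mem_iUnion₂] at hmem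
    obtain ⟨D, hD, hmemD⟩ := hmem
    exact hnot D hD hmemD
  obtain ⟨D, hD, hfreqD⟩ := h1
  have hxD : x ∈ D := by
    rw [← (F.poly D hD).isClosed.closure_eq, Metric.mem_closure_iff]
    intro r hr
    have hev : ∀ᶠ δ in 𝓝[>] (0:ℝ), δ ∈ Set.Ioo 0 r :=
      Ioo_mem_nhdsGT_of_mem ⟨le_refl 0, hr⟩
    obtain ⟨δ, hmemD, hδ⟩ := (hfreqD.and_eventually hev).exists
    refine ⟨x - δ • ee i, hmemD, ?_⟩
    rw [dist_eq_norm, sub_sub_cancel, norm_smul, ee, EuclideanSpace.norm_single, norm_one,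
      mul_one, Real.norm_eq_abs, abs_of_pos hδ.1]
    exact hδ.2
  have hxC : x ∈ C := intrinsicInterior_subset hx
  have hCD : C ⊆ D := fun z hz =>
    (face_subset_of_relint_mem (F.inter_face C hC D hD) hx ⟨hxC, hxD⟩ hz).2
  obtain ⟨ε, hε, hz⟩ := relint_extend hy hxC
  have hzD : y + ε • (y - x) ∈ D := hCD hz
  have h1ε : (0:ℝ) < 1 + ε := by linarith
  have hcomb : ∀ δ : ℝ, x - δ • ee i ∈ D → y - (ε / (1 + ε) * δ) • ee i ∈ D := by
    intro δ hmemδ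
    have hkey : y - (ε / (1 + ε) * δ) • ee i
        = (ε / (1 + ε)) • (x - δ • ee i) + (1 / (1 + ε)) • (y + ε • (y - x)) := by
      match_scalars <;> field_simp <;> ring
    rw [hkey]
    exact (F.poly D hD).convex hmemδ hzD (by positivity) (by positivity) (by field_simp; ring)
  have hfreq2 : ∃ᶠ δ in 𝓝[>] (0:ℝ), y - (ε / (1 + ε) * δ) • ee i ∈ F.support :=
    hfreqD.mono fun δ hmem => Set.subset_biUnion_of_mem hD (hcomb δ hmem)
  have htends : Tendsto (fun δ : ℝ => ε / (1 + ε) * δ) (𝓝[>] (0:ℝ)) (𝓝[>] (0:ℝ)) := by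
    rw [tendsto_nhdsWithin_iff]
    constructor
    · have : Tendsto (fun δ : ℝ => ε / (1 + ε) * δ) (𝓝 0) (𝓝 (ε / (1 + ε) * 0)) :=
        (continuous_const.mul continuous_id).tendsto 0
      rw [mul_zero] at this
      exact this.mono_left nhdsWithin_le_nhds
    · filter_upwards [self_mem_nhdsWithin] with δ hδ
      exact mul_pos (show (0:ℝ) < ε / (1 + ε) by positivity) hδ
  exact htends.frequently hfreq2

lemma argmin_const {n m : ℕ} (hm : 0 < m) (hmn : m < n) (F : PolyFan n)
    (hsupp : F.support = Tset n m) {C : Set (EuclideanSpace ℝ (Fin n))} (hC : C ∈ F.cones)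
    {x y : EuclideanSpace ℝ (Fin n)}
    (hx : x ∈ intrinsicInterior ℝ C) (hy : y ∈ intrinsicInterior ℝ C) :
    argminSet x = argminSet y := by
  have h2 : 2 ≤ n - m + 1 := by omega
  have hCsub : C ⊆ Tset n m := by
    rw [← hsupp, PolyFan.support]
    exact Set.subset_biUnion_of_mem (u := id) hC
  have hxT : x ∈ Tset n m := hCsub (intrinsicInterior_subset hx)
  have hyT : y ∈ Tset n m := hCsub (intrinsicInterior_subset hy)
  have key : ∀ x' y' : EuclideanSpace ℝ (Fin n), x' ∈ intrinsicInterior ℝ C →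
      y' ∈ intrinsicInterior ℝ C → x' ∈ Tset n m → y' ∈ Tset n m →
      ∀ i, i ∈ argminSet x' → i ∈ argminSet y' := by
    intro x' y' hx' hy' hx'T hy'T i hix
    by_contra hiy
    have hSy : Sdir (Tset n m) y' i := Sdir_of_not_mem_argmin hy'T hiy
    rw [← hsupp] at hSy
    have hSx : Sdir F.support x' i := Sdir_transfer F hC hy' hx' hSy
    rw [hsupp] at hSx
    exact not_Sdir_of_mem_argmin h2 hix hSx
  apply Finset.ext
  intro i
  exact ⟨key x y hx hy hxT hyT i, key y x hy hx hyT hxT i⟩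

/-- every fan with support `|W_n^m|` refines `W_n^m`: each relatively open
cone of `F` is contained in a relatively open cone `C̊_A` of `W_n^m`. -/
theorem stmt5 {n m : ℕ} (hm : 0 < m) (hmn : m < n) (F : PolyFan n)
    (hsupp : F.support = {ω | ∃ A : Finset (Fin n), n - m + 1 ≤ A.card ∧ ω ∈ coneW A}) :
    ∀ C ∈ F.cones, ∃ A : Finset (Fin n), n - m + 1 ≤ A.card ∧
      relint C ⊆ relint (coneW A) := by
  intro C hC
  have hsupp' : F.support = Tset n m := hsupp
  by_cases hne : (relint C).Nonempty
  · obtain ⟨x, hx⟩ := hne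
    have hx' : x ∈ intrinsicInterior ℝ C := hx
    refine ⟨argminSet x, ?_, ?_⟩
    · have hxT : x ∈ Tset n m := by
        rw [← hsupp', PolyFan.support]
        exact Set.subset_biUnion_of_mem (u := id) hC (intrinsicInterior_subset hx')
      obtain ⟨A', hcard, hA'⟩ := hxT
      exact le_trans hcard (Finset.card_le_card (coneW_subset_argminSet hA'))
    · intro y hy
      have hy' : y ∈ intrinsicInterior ℝ C := hy
      have heq := argmin_const hm hmn F hsupp' hC hx' hy'
      exact mem_relint_coneW heq.symm
  · rw [Set.not_nonempty_iff_eq_empty] at hne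
    obtain ⟨A, hAsub, hAcard⟩ := Finset.exists_subset_card_eq
      (s := (Finset.univ : Finset (Fin n))) (n := n - m + 1)
      (by rw [Finset.card_univ, Fintype.card_fin]; omega)
    refine ⟨A, le_of_eq hAcard.symm, ?_⟩
    rw [show relint C = ∅ from hne]
    exact Set.empty_subset _
end
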